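/- Let G be a finite simple graph, let M be a maximum 2-matching of G, and let v be an isolated vertex of M. If v is adjacent in G to a vertex lying on a path component of M having at least 4 vertices (that is, a path of length at least 3), then G has a maximum 2-matching with strictly fewer isolated vertices than M. -/

import Mathlib

open SimpleGraph

/-- A 2-matching of `G`: a spanning subgraph (given as a graph `M ≤ G` on the same
vertex set) in which every vertex has degree at most 2. -/
def SimpleGraph.IsTwoMatching {V : Type*} (G M : SimpleGraph V) : Prop :=
  M ≤ G ∧ ∀ v : V, (M.neighborSet v).ncard ≤ 2

/-- A maximum 2-matching of `G`: a 2-matching with the maximum number of edges. -/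
def SimpleGraph.IsMaxTwoMatching {V : Type*} (G M : SimpleGraph V) : Prop :=
  G.IsTwoMatching M ∧
    ∀ M' : SimpleGraph V, G.IsTwoMatching M' → M'.edgeSet.ncard ≤ M.edgeSet.ncard

/-- A path cover of `G`, encoded as a spanning linear forest: a spanning subgraph
`P ≤ G` with maximum degree at most 2 and no cycles.  Its connected components are
exactly the vertex-disjoint paths covering all vertices of `G`. -/
def SimpleGraph.IsPathCover {V : Type*} (G P : SimpleGraph V) : Prop :=
  P ≤ G ∧ (∀ v : V, (P.neighborSet v).ncard ≤ 2) ∧ P.IsAcyclic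

/-- The size of a path cover: the number of paths, i.e. of connected components. -/
noncomputable def SimpleGraph.coverSize {V : Type*} (P : SimpleGraph V) : ℕ :=
  Nat.card P.ConnectedComponent

/-- The number of 0-paths (isolated vertices) of a path cover / 2-matching. -/
noncomputable def SimpleGraph.numZeroPaths {V : Type*} (P : SimpleGraph V) : ℕ :=
  {v : V | P.neighborSet v = ∅}.ncard

/-- The number of 1-paths (connected components consisting of a single edge,
i.e. having exactly two vertices) of a path cover. -/
noncomputable def SimpleGraph.numOnePaths {V : Type*} (P : SimpleGraph V) : ℕ :=
  {c : P.ConnectedComponent | c.supp.ncard = 2}.ncard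

/-- The number of connected components having at most two vertices. -/
noncomputable def SimpleGraph.numSmallComponents {V : Type*} (M : SimpleGraph V) : ℕ :=
  {c : M.ConnectedComponent | c.supp.ncard ≤ 2}.ncard

/-- The number of cycle components of a 2-matching: the components in which
every vertex has degree exactly 2. -/
noncomputable def SimpleGraph.numCycleComponents {V : Type*} (M : SimpleGraph V) : ℕ :=
  {c : M.ConnectedComponent | ∀ v ∈ c.supp, (M.neighborSet v).ncard = 2}.ncard


section Aux
variable {V : Type*}

private lemma edge_le_of_adj {G : SimpleGraph V} {v w : V} (h : G.Adj v w) :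
    SimpleGraph.edge v w ≤ G := by
  intro a b hab
  rw [edge_adj] at hab
  rcases hab.1 with ⟨rfl, rfl⟩ | ⟨rfl, rfl⟩
  · exact h
  · exact h.symm

private lemma aux_deg2 [Fintype V] (G M : SimpleGraph V) (hM : G.IsMaxTwoMatching M)
    (v w : V) (hv : M.neighborSet v = ∅) (hadj : G.Adj v w) :
    (M.neighborSet w).ncard = 2 := by
  by_contra h
  have hle : (M.neighborSet w).ncard ≤ 1 := by have := hM.1.2 w; omega
  have hvw : v ≠ w := hadj.ne
  have hnadjv : ∀ z, ¬ M.Adj v z := by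
    intro z h'
    have : z ∈ M.neighborSet v := h'
    simp [hv] at this
  set M' := M ⊔ SimpleGraph.edge v w with hM'def
  have hadj' : ∀ c d : V, M'.Adj c d ↔
      M.Adj c d ∨ ((c = v ∧ d = w) ∨ (c = w ∧ d = v)) := by
    intro c d
    simp only [hM'def, sup_adj, edge_adj]
    constructor
    · rintro (h1 | ⟨h1, _⟩)
      · exact Or.inl h1
      · exact Or.inr h1
    · rintro (h1 | (⟨rfl, rfl⟩ | ⟨rfl, rfl⟩))
      · exact Or.inl h1
      · exact Or.inr ⟨Or.inl ⟨rfl, rfl⟩, hvw⟩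
      · exact Or.inr ⟨Or.inr ⟨rfl, rfl⟩, fun h' => hvw h'.symm⟩
  have hnv : M'.neighborSet v = {w} := by
    ext z
    rw [mem_neighborSet, hadj']
    constructor
    · rintro (h1 | (⟨_, rfl⟩ | ⟨h1, _⟩))
      · exact absurd h1 (hnadjv z)
      · rfl
      · exact absurd h1 hvw
    · rintro rfl; exact Or.inr (Or.inl ⟨rfl, rfl⟩)
  have hnwsub : M'.neighborSet w ⊆ insert v (M.neighborSet w) := by
    intro z hz
    rw [mem_neighborSet, hadj' w z] at hz
    rcases hz with h1 | (⟨h1, _⟩ | ⟨_, rfl⟩)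
    · exact Set.mem_insert_of_mem _ h1
    · exact absurd h1 hvw.symm
    · exact Set.mem_insert _ _
  have hnother : ∀ u, u ≠ v → u ≠ w → M'.neighborSet u = M.neighborSet u := by
    intro u huv huw
    ext z
    rw [mem_neighborSet, hadj']
    constructor
    · rintro (h1 | (⟨rfl, _⟩ | ⟨rfl, _⟩))
      · exact h1
      · exact absurd rfl huv
      · exact absurd rfl huw
    · exact Or.inl
  have h2m : G.IsTwoMatching M' := by
    refine ⟨sup_le hM.1.1 (edge_le_of_adj hadj), ?_⟩
    intro u
    rcases eq_or_ne u v with rfl | huv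
    · rw [hnv]; simp
    · rcases eq_or_ne u w with rfl | huw
      · calc (M'.neighborSet u).ncard ≤ (insert v (M.neighborSet u)).ncard :=
              Set.ncard_le_ncard hnwsub (Set.toFinite _)
          _ ≤ (M.neighborSet u).ncard + 1 := Set.ncard_insert_le _ _
          _ ≤ 2 := by omega
      · rw [hnother u huv huw]; exact hM.1.2 u
  have hedge : M'.edgeSet = insert s(v, w) M.edgeSet := by
    rw [hM'def, edgeSet_sup]
    have he : (SimpleGraph.edge v w).edgeSet = {s(v, w)} := by
      ext e
      induction e with
      | _ a b =>
        simp only [mem_edgeSet, edge_adj, Set.mem_singleton_iff, Sym2.eq_iff]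
        constructor
        · rintro ⟨(⟨rfl, rfl⟩ | ⟨rfl, rfl⟩), hne⟩
          · exact Or.inl ⟨rfl, rfl⟩
          · exact Or.inr ⟨rfl, rfl⟩
        · rintro (⟨rfl, rfl⟩ | ⟨rfl, rfl⟩)
          · exact ⟨Or.inl ⟨rfl, rfl⟩, hvw⟩
          · exact ⟨Or.inr ⟨rfl, rfl⟩, fun h' => hvw h'.symm⟩
    rw [he, Set.union_singleton]
  have hmore : M.edgeSet.ncard < M'.edgeSet.ncard := by
    rw [hedge, Set.ncard_insert_of_notMem (by rw [mem_edgeSet]; exact hnadjv w) (Set.toFinite _)]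
    omega
  exact absurd (hM.2 M' h2m) (by omega)

private lemma aux_walk (M : SimpleGraph V) (w a b : V) (hnb : M.neighborSet w = {a, b})
    (ha : M.neighborSet a = {w}) (hb : M.neighborSet b = {w}) :
    ∀ {s u : V}, M.Walk s u → s ∈ ({w, a, b} : Set V) → u ∈ ({w, a, b} : Set V) := by
  intro s u p
  induction p with
  | nil => exact id
  | @cons s t u h p ih =>
    intro hs
    apply ih
    rcases hs with rfl | rfl | rfl
    · have : t ∈ M.neighborSet s := h
      rw [hnb] at this
      rcases this with rfl | rfl
      · exact Or.inr (Or.inl rfl)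
      · exact Or.inr (Or.inr rfl)
    · have : t ∈ M.neighborSet s := h
      rw [ha] at this
      rcases this with rfl
      exact Or.inl rfl
    · have : t ∈ M.neighborSet s := h
      rw [hb] at this
      rcases this with rfl
      exact Or.inl rfl

private lemma aux_key [Fintype V] (G M : SimpleGraph V) (hM : G.IsMaxTwoMatching M)
    (v w x y : V) (hv : M.neighborSet v = ∅) (hadj : G.Adj v w)
    (hnb : M.neighborSet w = {x, y}) (hxy : x ≠ y)
    (hdx : (M.neighborSet x).ncard = 2) :
    ∃ M' : SimpleGraph V, G.IsMaxTwoMatching M' ∧ M'.numZeroPaths < M.numZeroPaths := by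
  have hwx : M.Adj w x := by have : x ∈ M.neighborSet w := by rw [hnb]; simp
                             exact this
  have hwy : M.Adj w y := by have : y ∈ M.neighborSet w := by rw [hnb]; simp
                             exact this
  have hvw : v ≠ w := hadj.ne
  have hnadjv : ∀ z, ¬ M.Adj v z := by
    intro z h'
    have : z ∈ M.neighborSet v := h'
    simp [hv] at this
  have hvx : v ≠ x := by rintro rfl; exact hnadjv w hwx.symm
  have hvy : v ≠ y := by rintro rfl; exact hnadjv w hwy.symm
  have hwx' : w ≠ x := hwx.ne
  have hwy' : w ≠ y := hwy.ne
  set M' := M.deleteEdges {s(w, x)} ⊔ SimpleGraph.edge v w with hM'def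
  have hadj' : ∀ c d : V, M'.Adj c d ↔
      (M.Adj c d ∧ s(c, d) ≠ s(w, x)) ∨ ((c = v ∧ d = w) ∨ (c = w ∧ d = v)) := by
    intro c d
    simp only [hM'def, sup_adj, deleteEdges_adj, Set.mem_singleton_iff, edge_adj]
    constructor
    · rintro (⟨h1, h2⟩ | ⟨h1, h2⟩)
      · exact Or.inl ⟨h1, h2⟩
      · exact Or.inr h1
    · rintro (⟨h1, h2⟩ | (⟨rfl, rfl⟩ | ⟨rfl, rfl⟩))
      · exact Or.inl ⟨h1, h2⟩
      · exact Or.inr ⟨Or.inl ⟨rfl, rfl⟩, hvw⟩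
      · exact Or.inr ⟨Or.inr ⟨rfl, rfl⟩, fun h => hvw h.symm⟩
  -- neighbor set computations
  have hnv : M'.neighborSet v = {w} := by
    ext z
    rw [mem_neighborSet, hadj']
    constructor
    · rintro (⟨h1, _⟩ | (⟨_, rfl⟩ | ⟨h1, _⟩))
      · exact absurd h1 (hnadjv z)
      · rfl
      · exact absurd h1 hvw
    · rintro rfl; exact Or.inr (Or.inl ⟨rfl, rfl⟩)
  have hnw : M'.neighborSet w = {y, v} := by
    ext z
    rw [mem_neighborSet, hadj']
    constructor
    · rintro (⟨h1, h2⟩ | (⟨h1, _⟩ | ⟨_, rfl⟩))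
      · have : z ∈ M.neighborSet w := h1
        rw [hnb] at this
        rcases this with rfl | rfl
        · exact absurd rfl h2
        · exact Or.inl rfl
      · exact absurd h1 hvw.symm
      · exact Or.inr rfl
    · rintro (rfl | rfl)
      · refine Or.inl ⟨hwy, ?_⟩
        intro h
        rw [Sym2.eq_iff] at h
        rcases h with ⟨_, rfl⟩ | ⟨h1, _⟩
        · exact hxy rfl
        · exact hwx' h1
      · exact Or.inr (Or.inr ⟨rfl, rfl⟩)
  have hnx : M'.neighborSet x = M.neighborSet x \ {w} := by
    ext z
    rw [mem_neighborSet, hadj']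
    constructor
    · rintro (⟨h1, h2⟩ | (⟨h1, _⟩ | ⟨h1, _⟩))
      · refine ⟨h1, ?_⟩
        rintro rfl
        exact h2 (Sym2.eq_swap)
      · exact absurd h1 hvx.symm
      · exact absurd h1.symm hwx'
    · rintro ⟨h1, h2⟩
      refine Or.inl ⟨h1, ?_⟩
      intro h
      rw [Sym2.eq_iff] at h
      rcases h with ⟨rfl, _⟩ | ⟨_, rfl⟩
      · exact hwx' rfl
      · exact h2 rfl
  have hnother : ∀ u, u ≠ v → u ≠ w → u ≠ x → M'.neighborSet u = M.neighborSet u := by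
    intro u huv huw hux
    ext z
    rw [mem_neighborSet, hadj']
    constructor
    · rintro (⟨h1, _⟩ | (⟨rfl, _⟩ | ⟨rfl, _⟩))
      · exact h1
      · exact absurd rfl huv
      · exact absurd rfl huw
    · intro h1
      refine Or.inl ⟨h1, ?_⟩
      intro h
      rw [Sym2.eq_iff] at h
      rcases h with ⟨rfl, _⟩ | ⟨rfl, _⟩
      · exact huw rfl
      · exact hux rfl
  have hwxmem : w ∈ M.neighborSet x := hwx.symm
  have hnxcard : (M'.neighborSet x).ncard = 1 := by
    rw [hnx, Set.ncard_diff_singleton_of_mem hwxmem, hdx]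
  -- M' is a 2-matching
  have h2m : G.IsTwoMatching M' := by
    refine ⟨sup_le (le_trans (deleteEdges_le _) hM.1.1) (edge_le_of_adj hadj), ?_⟩
    intro u
    by_cases huv : u = v
    · subst huv; rw [hnv]; simp
    · by_cases huw : u = w
      · subst huw; rw [hnw]
        rw [Set.ncard_pair (fun h => hvy h.symm)]
      · by_cases hux : u = x
        · subst hux; omega
        · rw [hnother u huv huw hux]; exact hM.1.2 u
  -- edge count
  have hedge : M'.edgeSet = insert s(v, w) (M.edgeSet \ {s(w, x)}) := by
    rw [hM'def, edgeSet_sup, edgeSet_deleteEdges]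
    have : (SimpleGraph.edge v w).edgeSet = {s(v, w)} := by
      ext e
      induction e with
      | _ a b =>
        simp only [mem_edgeSet, edge_adj, Set.mem_singleton_iff, Sym2.eq_iff]
        constructor
        · rintro ⟨(⟨rfl, rfl⟩ | ⟨rfl, rfl⟩), hne⟩
          · exact Or.inl ⟨rfl, rfl⟩
          · exact Or.inr ⟨rfl, rfl⟩
        · rintro (⟨rfl, rfl⟩ | ⟨rfl, rfl⟩)
          · exact ⟨Or.inl ⟨rfl, rfl⟩, hvw⟩
          · exact ⟨Or.inr ⟨rfl, rfl⟩, fun h => hvw h.symm⟩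
    rw [this, Set.union_singleton]
  have hcount : M'.edgeSet.ncard = M.edgeSet.ncard := by
    rw [hedge]
    have hnotmem : s(v, w) ∉ M.edgeSet \ {s(w, x)} := by
      rintro ⟨h1, _⟩
      exact hnadjv w h1
    rw [Set.ncard_insert_of_notMem hnotmem (Set.toFinite _),
      Set.ncard_diff_singleton_of_mem (by rwa [mem_edgeSet])]
    have : 0 < M.edgeSet.ncard :=
      Set.ncard_pos (Set.toFinite _) |>.mpr ⟨s(w, x), by rwa [mem_edgeSet]⟩
    omega
  refine ⟨M', ⟨h2m, fun M'' h'' => by rw [hcount]; exact hM.2 M'' h''⟩, ?_⟩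
  -- zero paths
  have hzero : {u : V | M'.neighborSet u = ∅} = {u : V | M.neighborSet u = ∅} \ {v} := by
    ext u
    simp only [Set.mem_setOf_eq, Set.mem_diff, Set.mem_singleton_iff]
    by_cases huv : u = v
    · subst huv
      simp [hnv]
    · by_cases huw : u = w
      · subst huw
        constructor
        · intro h; rw [hnw] at h; exact ((Set.insert_nonempty _ _).ne_empty h).elim
        · rintro ⟨h, _⟩; rw [hnb] at h; exact ((Set.insert_nonempty _ _).ne_empty h).elim
      · by_cases hux : u = x
        · subst hux
          constructor
          · intro h
            exfalso
            rw [h, Set.ncard_empty] at hnxcard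
            omega
          · rintro ⟨h, _⟩
            exfalso
            rw [h, Set.ncard_empty] at hdx
            omega
        · rw [hnother u huv huw hux]
          exact ⟨fun h => ⟨h, huv⟩, fun h => h.1⟩
  rw [numZeroPaths, numZeroPaths, hzero]
  exact Set.ncard_diff_singleton_lt_of_mem hv (Set.toFinite _)

end Aux

/-- If an isolated vertex `v` of a maximum 2-matching `M` of `G` is
adjacent in `G` to a vertex `w` lying on a path component of `M` with at least 4
vertices (a component containing no cycle), then `G` has a maximum 2-matching with
strictly fewer isolated vertices than `M`. -/
theorem stmt12 {V : Type*} [Fintype V] (G M : SimpleGraph V)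
    (hM : G.IsMaxTwoMatching M) (v : V) (hv : M.neighborSet v = ∅)
    (w : V) (hadj : G.Adj v w)
    (hw4 : 4 ≤ (M.connectedComponentMk w).supp.ncard)
    (hwpath : ∀ x : V, M.Reachable w x → ∀ c : M.Walk x x, ¬ c.IsCycle) :
    ∃ M' : SimpleGraph V, G.IsMaxTwoMatching M' ∧
      M'.numZeroPaths < M.numZeroPaths := by
  have hd2 := aux_deg2 G M hM v w hv hadj
  obtain ⟨a, b, hab, hnb⟩ := Set.ncard_eq_two.mp hd2
  have hwa : M.Adj w a := by
    have : a ∈ M.neighborSet w := by rw [hnb]; exact Or.inl rfl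
    exact this
  have hwb : M.Adj w b := by
    have : b ∈ M.neighborSet w := by rw [hnb]; exact Or.inr rfl
    exact this
  by_cases hda : (M.neighborSet a).ncard = 2
  · exact aux_key G M hM v w a b hv hadj hnb hab hda
  · by_cases hdb : (M.neighborSet b).ncard = 2
    · exact aux_key G M hM v w b a hv hadj (by rw [hnb, Set.pair_comm]) hab.symm hdb
    · exfalso
      -- both neighbors are leaves: the component has at most 3 vertices
      have hOne : ∀ z : V, M.Adj w z → ¬ (M.neighborSet z).ncard = 2 →
          M.neighborSet z = {w} := by
        intro z hz hnz
        have hle : (M.neighborSet z).ncard ≤ 2 := hM.1.2 z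
        have hmem : w ∈ M.neighborSet z := hz.symm
        have hpos : 0 < (M.neighborSet z).ncard :=
          Set.ncard_pos (Set.toFinite _) |>.mpr ⟨w, hmem⟩
        have h1 : (M.neighborSet z).ncard = 1 := by omega
        obtain ⟨c, hc⟩ := Set.ncard_eq_one.mp h1
        rw [hc] at hmem ⊢
        rw [show c = w from hmem.symm]
      have ha1 := hOne a hwa hda
      have hb1 := hOne b hwb hdb
      have hsub : (M.connectedComponentMk w).supp ⊆ ({w, a, b} : Set V) := by
        intro u hu
        rw [ConnectedComponent.mem_supp_iff] at hu
        have hr : M.Reachable w u := ((ConnectedComponent.eq).mp hu).symm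
        obtain ⟨p⟩ := hr
        exact aux_walk M w a b hnb ha1 hb1 p (Or.inl rfl)
      have h3 : ({w, a, b} : Set V).ncard ≤ 3 := by
        calc ({w, a, b} : Set V).ncard ≤ ({a, b} : Set V).ncard + 1 :=
              Set.ncard_insert_le _ _
          _ ≤ (({b} : Set V).ncard + 1) + 1 := by
              have := Set.ncard_insert_le a ({b} : Set V); omega
          _ = 3 := by rw [Set.ncard_singleton]
      have := Set.ncard_le_ncard hsub (Set.toFinite _)
      omega
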